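/- Let ω be the block partial permutation [[I_{r₁}, 0, 0, 0], [0, 0, I_{r₂}, 0], [0, 0, 0, 0]] as above, and Q ∈ X_ω. For A ∈ M_{m,n}(ℝ) with columns A₁, …, A_n, define t_c(A) to be the m×n matrix whose first r₁ + n₁ columns are zero and whose j-th column for j > r₁ + n₁ is the orthogonal projection of A_j onto the column space C(Q). Then Q + s·t_c(A) ∈ X̄_ω for every s ∈ ℝ; in particular t_c(A) is tangent to X_ω at Q. -/

import Mathlib

/-- Upper-left `p × q` submatrix. -/
def ulSub {m n : ℕ} (A : Matrix (Fin m) (Fin n) ℝ) (p q : ℕ) (hp : p ≤ m) (hq : q ≤ n) :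
    Matrix (Fin p) (Fin q) ℝ :=
  A.submatrix (Fin.castLE hp) (Fin.castLE hq)

/-- The block partial permutation `[[I_{r₁},0,0,0],[0,0,I_{r₂},0],[0,0,0,0]]`. -/
def omegaBlk (r₁ r₂ m₁ n₁ n₂ : ℕ) :
    Matrix (Fin (r₁ + r₂ + m₁)) (Fin (r₁ + n₁ + r₂ + n₂)) ℝ :=
  Matrix.of fun i j =>
    if (i.val < r₁ ∧ j.val = i.val) ∨
        (r₁ ≤ i.val ∧ i.val < r₁ + r₂ ∧ j.val = i.val + n₁) then 1 else 0

/-- Membership in the regular part `X_ω`. -/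
def memX {m n : ℕ} (ω A : Matrix (Fin m) (Fin n) ℝ) : Prop :=
  ∀ (p q : ℕ) (_ : 1 ≤ p) (_ : 1 ≤ q) (hp : p ≤ m) (hq : q ≤ n),
    (ulSub A p q hp hq).rank = (ulSub ω p q hp hq).rank

/-- Membership in the matrix Schubert variety `X̄_ω` (upper-left rank inequalities). -/
def memXbar {m n : ℕ} (ω A : Matrix (Fin m) (Fin n) ℝ) : Prop :=
  ∀ (p q : ℕ) (_ : 1 ≤ p) (_ : 1 ≤ q) (hp : p ≤ m) (hq : q ≤ n),
    (ulSub A p q hp hq).rank ≤ (ulSub ω p q hp hq).rank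

/-- The column space `C(Q)` of a matrix `Q`. -/
noncomputable def colSpace {m n : ℕ} (Q : Matrix (Fin m) (Fin n) ℝ) :
    Submodule ℝ (EuclideanSpace ℝ (Fin m)) :=
  Submodule.span ℝ (Set.range fun j : Fin n =>
    (show EuclideanSpace ℝ (Fin m) from WithLp.toLp 2 fun i => Q i j))

/-- The vector `t_c(A)`: first `r₁ + n₁` columns zero, and column `j > r₁ + n₁` the
orthogonal projection of the `j`-th column of `A` onto the column space of `Q`. -/
noncomputable def tc (r₁ r₂ m₁ n₁ n₂ : ℕ)
    (Q A : Matrix (Fin (r₁ + r₂ + m₁)) (Fin (r₁ + n₁ + r₂ + n₂)) ℝ) :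
    Matrix (Fin (r₁ + r₂ + m₁)) (Fin (r₁ + n₁ + r₂ + n₂)) ℝ :=
  Matrix.of fun i j =>
    if j.val < r₁ + n₁ then 0
    else
      (Submodule.orthogonalProjectionOnto (colSpace Q)
        (show EuclideanSpace ℝ (Fin (r₁ + r₂ + m₁)) from WithLp.toLp 2 fun i' => A i' j) :
          EuclideanSpace ℝ (Fin (r₁ + r₂ + m₁))) i

open Matrix Submodule Set Filter Topology

lemma col_eq_tr {p q : ℕ} (A : Matrix (Fin p) (Fin q) ℝ) :
    A.col = (Aᵀ : Fin q → Fin p → ℝ) := rfl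

section GeneralMatrix

/-- column span comparison gives rank comparison -/
lemma rank_le_of_colspan_le {p q q' : ℕ} (B : Matrix (Fin p) (Fin q) ℝ)
    (C : Matrix (Fin p) (Fin q') ℝ)
    (h : span ℝ (Set.range Bᵀ) ≤ span ℝ (Set.range Cᵀ)) : B.rank ≤ C.rank := by
  rw [Matrix.rank_eq_finrank_span_cols, Matrix.rank_eq_finrank_span_cols]
  exact Submodule.finrank_mono h

/-- rank of a column-selected submatrix is at most the rank -/
lemma rank_colsel_le {p q r : ℕ} (B : Matrix (Fin p) (Fin q) ℝ) (g : Fin r → Fin q) :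
    (B.submatrix id g).rank ≤ B.rank := by
  apply rank_le_of_colspan_le
  rw [span_le]
  rintro _ ⟨a, rfl⟩
  exact subset_span ⟨g a, rfl⟩

/-- rank is at most the rank of the first `k` columns plus `q - k`. -/
lemma rank_le_left_add {p q k : ℕ} (B : Matrix (Fin p) (Fin q) ℝ) (hk : k ≤ q) :
    B.rank ≤ (B.submatrix id (Fin.castLE hk)).rank + (q - k) := by
  set L := B.submatrix id (Fin.castLE hk) with hL
  set R := B.submatrix id (fun a : Fin (q - k) => (⟨k + a.1, by omega⟩ : Fin q)) with hR
  have hsub : span ℝ (Set.range Bᵀ) ≤ span ℝ (Set.range Lᵀ) ⊔ span ℝ (Set.range Rᵀ) := by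
    rw [span_le]
    rintro _ ⟨j, rfl⟩
    by_cases hj : (j : ℕ) < k
    · refine Submodule.mem_sup_left (subset_span ⟨⟨(j : ℕ), hj⟩, ?_⟩)
      funext i
      rfl
    · refine Submodule.mem_sup_right (subset_span ⟨⟨(j : ℕ) - k, by omega⟩, ?_⟩)
      funext i
      show B i ⟨k + ((j : ℕ) - k), by omega⟩ = B i j
      congr 1
      exact Fin.ext (Nat.add_sub_cancel' (Nat.le_of_not_lt hj))
  calc B.rank = Module.finrank ℝ (span ℝ (Set.range Bᵀ)) := Matrix.rank_eq_finrank_span_cols B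
    _ ≤ Module.finrank ℝ ↥(span ℝ (Set.range Lᵀ) ⊔ span ℝ (Set.range Rᵀ)) :=
        Submodule.finrank_mono hsub
    _ ≤ Module.finrank ℝ (span ℝ (Set.range Lᵀ)) + Module.finrank ℝ (span ℝ (Set.range Rᵀ)) := by
        have := Submodule.finrank_sup_add_finrank_inf_eq
          (span ℝ (Set.range Lᵀ)) (span ℝ (Set.range Rᵀ))
        omega
    _ = L.rank + R.rank := by
        rw [Matrix.rank_eq_finrank_span_cols, Matrix.rank_eq_finrank_span_cols, col_eq_tr, col_eq_tr]
    _ ≤ L.rank + (q - k) := by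
        have := Matrix.rank_le_card_width R
        simp only [Fintype.card_fin] at this
        omega

/-- Lower semicontinuity of rank along an affine line through a matrix. -/
lemma eventually_rank_ge {p q : ℕ} (P N : Matrix (Fin p) (Fin q) ℝ) :
    ∀ᶠ s : ℝ in 𝓝 0, P.rank ≤ (P + s • N).rank := by
  obtain ⟨b, hbsub, hbspan, hbind⟩ := exists_linearIndependent ℝ (Set.range Pᵀ)
  have hbfin : b.Finite := (Set.finite_range Pᵀ).subset hbsub
  haveI : Fintype b := hbfin.fintype
  have hcard : Fintype.card b = P.rank := by
    rw [Matrix.rank_eq_finrank_span_cols, col_eq_tr, ← hbspan, finrank_span_set_eq_card hbind,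
      Set.toFinset_card]
  -- choose a column index for each element of b
  have hchoice : ∀ x : b, ∃ j : Fin q, Pᵀ j = (x : Fin p → ℝ) := fun x => hbsub x.2
  choose g0 hg0 using hchoice
  let e : Fin P.rank ≃ b := (Fintype.equivFinOfCardEq hcard).symm
  let g : Fin P.rank → Fin q := fun a => g0 (e a)
  let C : ℝ → Matrix (Fin p) (Fin P.rank) ℝ := fun s => (P + s • N).submatrix id g
  have hC0 : (C 0)ᵀ = fun a => ((e a : b) : Fin p → ℝ) := by
    funext a
    have : (C 0)ᵀ a = Pᵀ (g a) := by
      funext i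
      simp [C, Matrix.add_apply]
    rw [this, hg0]
  have hind : LinearIndependent ℝ (C 0)ᵀ := by
    rw [hC0]
    exact hbind.comp e e.injective
  have hrank0 : (C 0).rank = P.rank := by
    rw [Matrix.rank_eq_finrank_span_cols, col_eq_tr, finrank_span_eq_card hind, Fintype.card_fin]
  have hD0 : ((C 0)ᵀ * C 0).det ≠ 0 := by
    have hr : ((C 0)ᵀ * C 0).rank = P.rank := by
      rw [Matrix.rank_transpose_mul_self, hrank0]
    have htop : LinearMap.range ((C 0)ᵀ * C 0).mulVecLin = ⊤ := by
      apply Submodule.eq_top_of_finrank_eq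
      rw [Module.finrank_pi, Fintype.card_fin]
      exact hr
    have hsurj : Function.Surjective ((C 0)ᵀ * C 0).mulVec := by
      intro y
      have hy : y ∈ LinearMap.range ((C 0)ᵀ * C 0).mulVecLin := htop ▸ Submodule.mem_top
      obtain ⟨x, hx⟩ := hy
      exact ⟨x, hx⟩
    have := Matrix.mulVec_surjective_iff_isUnit.mp hsurj
    exact ((Matrix.isUnit_iff_isUnit_det _).mp this).ne_zero
  have hcont : Continuous fun s : ℝ => ((C s)ᵀ * C s).det := by
    have hCc : Continuous fun s : ℝ => C s := by
      apply continuous_matrix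
      intro i j
      simp only [C, Matrix.submatrix_apply, Matrix.add_apply, Matrix.smul_apply, smul_eq_mul,
        id_eq]
      fun_prop
    exact (hCc.matrix_transpose.matrix_mul hCc).matrix_det
  filter_upwards [hcont.continuousAt.eventually_ne hD0] with s hs
  have hunit : IsUnit ((C s)ᵀ * C s) :=
    (Matrix.isUnit_iff_isUnit_det _).mpr (isUnit_iff_ne_zero.mpr hs)
  have h1 : ((C s)ᵀ * C s).rank = P.rank := by
    rw [Matrix.rank_of_isUnit _ hunit, Fintype.card_fin]
  have h2 : (C s).rank = P.rank := by
    rw [← Matrix.rank_transpose_mul_self, h1]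
  calc P.rank = (C s).rank := h2.symm
    _ ≤ (P + s • N).rank := rank_colsel_le _ g

end GeneralMatrix

section Omega

/-- rank of the upper-left submatrix of `omegaBlk`. -/
lemma rank_ulSub_omega (r₁ r₂ m₁ n₁ n₂ p q : ℕ)
    (hp : p ≤ r₁ + r₂ + m₁) (hq : q ≤ r₁ + n₁ + r₂ + n₂) :
    (ulSub (omegaBlk r₁ r₂ m₁ n₁ n₂) p q hp hq).rank
      = min p (min q r₁) + (min p (min (r₁ + r₂) (q - n₁)) - r₁) := by
  set f1 := min p (min q r₁) with hf1
  set f2 := min p (min (r₁ + r₂) (q - n₁)) - r₁ with hf2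
  have hf1p : f1 ≤ p := by omega
  have hf1q : f1 ≤ q := by omega
  have hf1r : f1 ≤ r₁ := by omega
  have hf1fact : ∀ t : ℕ, t < f1 ↔ (t < p ∧ t < q ∧ t < r₁) := by intro t; omega
  have hf2fact : ∀ t : ℕ, t < f2 ↔ (t + r₁ < p ∧ t + r₁ < r₁ + r₂ ∧ t + r₁ + n₁ < q) := by
    intro t; omega
  clear_value f1 f2
  clear hf1 hf2
  set M := ulSub (omegaBlk r₁ r₂ m₁ n₁ n₂) p q hp hq with hM
  have hMapp : ∀ (i : Fin p) (j : Fin q), M i j =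
      if ((i : ℕ) < r₁ ∧ (j : ℕ) = (i : ℕ)) ∨
        (r₁ ≤ (i : ℕ) ∧ (i : ℕ) < r₁ + r₂ ∧ (j : ℕ) = (i : ℕ) + n₁) then 1 else 0 := by
    intro i j
    simp [hM, ulSub, omegaBlk]
  let idx : Fin (f1 + f2) → Fin p := fun a =>
    if h : (a : ℕ) < f1 then ⟨(a : ℕ), lt_of_lt_of_le h hf1p⟩
    else ⟨(a : ℕ) - f1 + r₁, by
      have ha := a.isLt
      have h2 := (hf2fact ((a : ℕ) - f1)).mp (by omega)
      omega⟩
  let colIdx : Fin (f1 + f2) → Fin q := fun a =>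
    if h : (a : ℕ) < f1 then ⟨(a : ℕ), lt_of_lt_of_le h hf1q⟩
    else ⟨(a : ℕ) - f1 + r₁ + n₁, by
      have ha := a.isLt
      have h2 := (hf2fact ((a : ℕ) - f1)).mp (by omega)
      omega⟩
  let v : Fin (f1 + f2) → (Fin p → ℝ) := fun a => Pi.single (idx a) 1
  have hidxval : ∀ a : Fin (f1 + f2),
      ((idx a : Fin p) : ℕ) = if (a : ℕ) < f1 then (a : ℕ) else (a : ℕ) - f1 + r₁ := by
    intro a
    simp only [idx]
    split_ifs <;> rfl
  have hcolIdxval : ∀ a : Fin (f1 + f2),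
      ((colIdx a : Fin q) : ℕ)
        = if (a : ℕ) < f1 then (a : ℕ) else (a : ℕ) - f1 + r₁ + n₁ := by
    intro a
    simp only [colIdx]
    split_ifs <;> rfl
  have hidx_inj : Function.Injective idx := by
    intro a b hab
    have h1 : ((idx a : Fin p) : ℕ) = ((idx b : Fin p) : ℕ) := congrArg Fin.val hab
    rw [hidxval, hidxval] at h1
    have ha := a.isLt
    have hb := b.isLt
    apply Fin.ext
    split_ifs at h1 <;> omega
  have hcol : ∀ a : Fin (f1 + f2), Mᵀ (colIdx a) = v a := by
    intro a
    funext i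
    have hip := i.isLt
    have ha := a.isLt
    rw [Matrix.transpose_apply, hMapp]
    simp only [v, Pi.single_apply, Fin.ext_iff, hidxval, hcolIdxval]
    by_cases h : (a : ℕ) < f1
    · have hfa := (hf1fact (a : ℕ)).mp h
      rw [if_pos h, if_pos h]
      split_ifs <;> first | rfl | (exfalso; omega)
    · have hfa := (hf2fact ((a : ℕ) - f1)).mp (by omega)
      rw [if_neg h, if_neg h]
      split_ifs <;> first | rfl | (exfalso; omega)
  have hlin : LinearIndependent ℝ v := by
    have hv : v = (⇑(Pi.basisFun ℝ (Fin p))) ∘ idx := by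
      funext a
      simp [v, Pi.basisFun_apply]
    rw [hv]
    exact (Pi.basisFun ℝ (Fin p)).linearIndependent.comp idx hidx_inj
  have hspan : span ℝ (Set.range Mᵀ) = span ℝ (Set.range v) := by
    apply le_antisymm
    · rw [span_le]
      rintro _ ⟨j, rfl⟩
      have hjq := j.isLt
      by_cases hA : (j : ℕ) < p ∧ (j : ℕ) < r₁
      · have hjf : (j : ℕ) < f1 := (hf1fact (j : ℕ)).mpr ⟨hA.1, hjq, hA.2⟩
        have hthis : j = colIdx ⟨(j : ℕ), by omega⟩ := by
          apply Fin.ext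
          rw [hcolIdxval]
          show (j : ℕ) = if (j : ℕ) < f1 then (j : ℕ) else (j : ℕ) - f1 + r₁ + n₁
          rw [if_pos hjf]
        rw [hthis, hcol]
        exact subset_span (Set.mem_range_self _)
      · by_cases hB : r₁ + n₁ ≤ (j : ℕ) ∧ (j : ℕ) - n₁ < r₁ + r₂ ∧ (j : ℕ) - n₁ < p
        · have haval : (j : ℕ) - n₁ - r₁ + f1 < f1 + f2 := by
            have := (hf2fact ((j : ℕ) - n₁ - r₁)).mpr (by omega)
            omega
          have hthis : j = colIdx ⟨(j : ℕ) - n₁ - r₁ + f1, haval⟩ := by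
            apply Fin.ext
            rw [hcolIdxval]
            show (j : ℕ) = if (j : ℕ) - n₁ - r₁ + f1 < f1 then (j : ℕ) - n₁ - r₁ + f1
              else (j : ℕ) - n₁ - r₁ + f1 - f1 + r₁ + n₁
            rw [if_neg (by omega)]
            omega
          rw [hthis, hcol]
          exact subset_span (Set.mem_range_self _)
        · have hzero : Mᵀ j = 0 := by
            funext i
            have hip := i.isLt
            rw [Matrix.transpose_apply, hMapp,
              if_neg (by rintro (⟨h1, h2⟩ | ⟨h1, h2, h3⟩) <;> omega), Pi.zero_apply]
          rw [hzero]
          exact zero_mem _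
    · rw [span_le]
      rintro _ ⟨a, rfl⟩
      exact subset_span ⟨colIdx a, hcol a⟩
  rw [Matrix.rank_eq_finrank_span_cols, col_eq_tr, hspan, finrank_span_eq_card hlin, Fintype.card_fin]

end Omega

section Main

variable {r₁ r₂ m₁ n₁ n₂ : ℕ}
  (Q A : Matrix (Fin (r₁ + r₂ + m₁)) (Fin (r₁ + n₁ + r₂ + n₂)) ℝ)

/-- Columns of `tc` lie in the span of the columns of `Q`. -/
lemma tc_col_mem (j : Fin (r₁ + n₁ + r₂ + n₂)) :
    (fun i => tc r₁ r₂ m₁ n₁ n₂ Q A i j) ∈ span ℝ (Set.range Qᵀ) := by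
  by_cases hj : (j : ℕ) < r₁ + n₁
  · have : (fun i => tc r₁ r₂ m₁ n₁ n₂ Q A i j) = 0 := by
      funext i
      simp [tc, hj]
    rw [this]
    exact zero_mem _
  · have htrans : ∀ x : EuclideanSpace ℝ (Fin (r₁ + r₂ + m₁)), x ∈ colSpace Q →
        (x : Fin (r₁ + r₂ + m₁) → ℝ) ∈ span ℝ (Set.range Qᵀ) := by
      intro x hx
      induction hx using Submodule.span_induction with
      | mem y hy =>
        obtain ⟨j', rfl⟩ := hy
        exact subset_span ⟨j', rfl⟩
      | zero => exact zero_mem _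
      | add y z _ _ hy hz => exact add_mem hy hz
      | smul c y _ hy => exact smul_mem _ c hy
    have hmem := (Submodule.orthogonalProjectionOnto (colSpace Q)
      (show EuclideanSpace ℝ (Fin (r₁ + r₂ + m₁)) from WithLp.toLp 2 fun i' => A i' j)).2
    have hcoleq : (fun i => tc r₁ r₂ m₁ n₁ n₂ Q A i j) =
        ((Submodule.orthogonalProjectionOnto (colSpace Q)
          (show EuclideanSpace ℝ (Fin (r₁ + r₂ + m₁)) from WithLp.toLp 2 fun i' => A i' j) :
            EuclideanSpace ℝ (Fin (r₁ + r₂ + m₁))) : Fin (r₁ + r₂ + m₁) → ℝ) := by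
      funext i
      simp [tc, hj]
    rw [hcoleq]
    exact htrans _ hmem

/-- If `q ≤ r₁ + n₁`, the upper-left submatrix of `Q + s • tc` is that of `Q`. -/
lemma ulSub_add_tc_of_le (s : ℝ) (p q : ℕ) (hp : p ≤ r₁ + r₂ + m₁)
    (hq : q ≤ r₁ + n₁ + r₂ + n₂) (hqk : q ≤ r₁ + n₁) :
    ulSub (Q + s • tc r₁ r₂ m₁ n₁ n₂ Q A) p q hp hq = ulSub Q p q hp hq := by
  ext i j
  have hj : (j : ℕ) < r₁ + n₁ := lt_of_lt_of_le j.isLt hqk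
  simp [ulSub, tc, Matrix.add_apply, Matrix.smul_apply, hj]

/-- rank of upper-left block of `Q + s•tc` with full column range is at most that of `Q`. -/
lemma rank_ulSub_add_tc_full (s : ℝ) (p : ℕ) (hp : p ≤ r₁ + r₂ + m₁) :
    (ulSub (Q + s • tc r₁ r₂ m₁ n₁ n₂ Q A) p (r₁ + n₁ + r₂ + n₂) hp le_rfl).rank ≤
      (ulSub Q p (r₁ + n₁ + r₂ + n₂) hp le_rfl).rank := by
  apply rank_le_of_colspan_le
  set τ : ((Fin (r₁ + r₂ + m₁)) → ℝ) →ₗ[ℝ] ((Fin p) → ℝ) :=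
    LinearMap.funLeft ℝ ℝ (Fin.castLE hp) with hτ
  have hul : ∀ (B : Matrix (Fin (r₁ + r₂ + m₁)) (Fin (r₁ + n₁ + r₂ + n₂)) ℝ),
      span ℝ (Set.range (ulSub B p (r₁ + n₁ + r₂ + n₂) hp le_rfl)ᵀ)
        = Submodule.map τ (span ℝ (Set.range Bᵀ)) := by
    intro B
    rw [Submodule.map_span]
    congr 1
    refine Eq.trans ?_ (Set.range_comp (⇑τ) (Bᵀ : Fin (r₁ + n₁ + r₂ + n₂) → Fin (r₁ + r₂ + m₁) → ℝ))
    rfl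
  rw [hul, hul]
  apply Submodule.map_mono
  rw [span_le]
  rintro _ ⟨j, rfl⟩
  have : (Q + s • tc r₁ r₂ m₁ n₁ n₂ Q A)ᵀ j
      = Qᵀ j + s • (fun i => tc r₁ r₂ m₁ n₁ n₂ Q A i j) := by
    funext i
    simp [Matrix.add_apply, Matrix.smul_apply]
  rw [this]
  exact add_mem (subset_span ⟨j, rfl⟩) (smul_mem _ s (tc_col_mem Q A j))

end Main

section TheoremProof

/-- Lemma 5.8: `Q + s · t_c(A)` lies in `X̄_ω` for every real `s`; in
particular `t_c(A)` is tangent to `X_ω` at `Q`. -/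
theorem tc_tangent (r₁ r₂ m₁ n₁ n₂ : ℕ)
    (Q : Matrix (Fin (r₁ + r₂ + m₁)) (Fin (r₁ + n₁ + r₂ + n₂)) ℝ)
    (hQ : memX (omegaBlk r₁ r₂ m₁ n₁ n₂) Q)
    (A : Matrix (Fin (r₁ + r₂ + m₁)) (Fin (r₁ + n₁ + r₂ + n₂)) ℝ) :
    (∀ s : ℝ, memXbar (omegaBlk r₁ r₂ m₁ n₁ n₂) (Q + s • tc r₁ r₂ m₁ n₁ n₂ Q A)) ∧
    tc r₁ r₂ m₁ n₁ n₂ Q A ∈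
      tangentConeAt ℝ {B | memX (omegaBlk r₁ r₂ m₁ n₁ n₂) B} Q := by
  set T := tc r₁ r₂ m₁ n₁ n₂ Q A with hT
  have hkn : r₁ + n₁ ≤ r₁ + n₁ + r₂ + n₂ := by omega
  -- Part A: the whole line lies in X̄_ω
  have hXbar : ∀ s : ℝ, memXbar (omegaBlk r₁ r₂ m₁ n₁ n₂) (Q + s • T) := by
    intro s p q h1 h2 hp hq
    rw [rank_ulSub_omega]
    by_cases hqk : q ≤ r₁ + n₁
    · rw [ulSub_add_tc_of_le Q A s p q hp hq hqk, hQ p q h1 h2 hp hq, rank_ulSub_omega]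
    · push_neg at hqk
      have hkq : r₁ + n₁ ≤ q := le_of_lt hqk
      -- first bound: through the first r₁ + n₁ columns
      have hb1 : (ulSub (Q + s • T) p q hp hq).rank
          ≤ (ulSub (Q + s • T) p (r₁ + n₁) hp hkn).rank + (q - (r₁ + n₁)) := by
        have h := rank_le_left_add (ulSub (Q + s • T) p q hp hq) hkq
        have heq : (ulSub (Q + s • T) p q hp hq).submatrix id (Fin.castLE hkq)
            = ulSub (Q + s • T) p (r₁ + n₁) hp hkn := rfl
        rwa [heq] at h
      rw [ulSub_add_tc_of_le Q A s p (r₁ + n₁) hp hkn le_rfl] at hb1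
      have hrk : (ulSub Q p (r₁ + n₁) hp hkn).rank
          = min p (min (r₁ + n₁) r₁) + (min p (min (r₁ + r₂) ((r₁ + n₁) - n₁)) - r₁) := by
        by_cases hk0 : r₁ + n₁ = 0
        · have hz : (ulSub Q p (r₁ + n₁) hp hkn).rank = 0 := by
            have h := Matrix.rank_le_card_width (ulSub Q p (r₁ + n₁) hp hkn)
            simp only [Fintype.card_fin] at h
            omega
          rw [hz]
          omega
        · rw [hQ p (r₁ + n₁) h1 (by omega) hp hkn, rank_ulSub_omega]
      rw [hrk] at hb1
      -- second bound: through the full set of columns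
      have hb2 : (ulSub (Q + s • T) p q hp hq).rank
          ≤ (ulSub Q p (r₁ + n₁ + r₂ + n₂) hp le_rfl).rank := by
        have h := rank_colsel_le (ulSub (Q + s • T) p (r₁ + n₁ + r₂ + n₂) hp le_rfl)
          (Fin.castLE hq)
        have heq : (ulSub (Q + s • T) p (r₁ + n₁ + r₂ + n₂) hp le_rfl).submatrix id
            (Fin.castLE hq) = ulSub (Q + s • T) p q hp hq := rfl
        rw [heq] at h
        exact le_trans h (rank_ulSub_add_tc_full Q A s p hp)
      have hrkn : (ulSub Q p (r₁ + n₁ + r₂ + n₂) hp le_rfl).rank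
          = min p (min (r₁ + n₁ + r₂ + n₂) r₁)
            + (min p (min (r₁ + r₂) ((r₁ + n₁ + r₂ + n₂) - n₁)) - r₁) := by
        rw [hQ p (r₁ + n₁ + r₂ + n₂) h1 (by omega) hp le_rfl, rank_ulSub_omega]
      rw [hrkn] at hb2
      -- arithmetic on the rank function of ω
      have ha1 : min p (min (r₁ + n₁) r₁) = min p r₁ := by omega
      have ha2 : min p (min (r₁ + r₂) ((r₁ + n₁) - n₁)) - r₁ = 0 := by omega
      have ha3 : min p (min (r₁ + n₁ + r₂ + n₂) r₁) = min p r₁ := by omega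
      have ha4 : min p (min (r₁ + r₂) ((r₁ + n₁ + r₂ + n₂) - n₁)) = min p (r₁ + r₂) := by
        omega
      have ha5 : min p (min q r₁) = min p r₁ := by omega
      rw [ha1, ha2] at hb1
      rw [ha3, ha4] at hb2
      rw [ha5]
      rcases Nat.le_total (q - n₁) (min p (r₁ + r₂)) with h | h
      · have ha6 : min p (min (r₁ + r₂) (q - n₁)) = q - n₁ := by omega
        rw [ha6]
        omega
      · have ha6 : min p (min (r₁ + r₂) (q - n₁)) = min p (r₁ + r₂) := by omega
        rw [ha6]
        omega
  -- Part B: eventually (for small s) the line lies in X_ω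
  have hev : ∀ᶠ s : ℝ in 𝓝 0, memX (omegaBlk r₁ r₂ m₁ n₁ n₂) (Q + s • T) := by
    have key : ∀ pq : ℕ × ℕ, ∀ᶠ s : ℝ in 𝓝 0,
        ∀ (_ : 1 ≤ pq.1) (_ : 1 ≤ pq.2) (hp : pq.1 ≤ r₁ + r₂ + m₁)
          (hq : pq.2 ≤ r₁ + n₁ + r₂ + n₂),
          (ulSub (Q + s • T) pq.1 pq.2 hp hq).rank
            = (ulSub (omegaBlk r₁ r₂ m₁ n₁ n₂) pq.1 pq.2 hp hq).rank := by
      rintro ⟨p, q⟩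
      by_cases hc : 1 ≤ p ∧ 1 ≤ q ∧ p ≤ r₁ + r₂ + m₁ ∧ q ≤ r₁ + n₁ + r₂ + n₂
      · obtain ⟨h1, h2, hp, hq⟩ := hc
        filter_upwards [eventually_rank_ge (ulSub Q p q hp hq) (ulSub T p q hp hq)]
          with s hs h1' h2' hp' hq'
        have hdecomp : ulSub (Q + s • T) p q hp' hq'
            = ulSub Q p q hp hq + s • ulSub T p q hp hq := by
          ext i j
          simp [ulSub, Matrix.add_apply, Matrix.smul_apply]
        refine le_antisymm (hXbar s p q h1 h2 hp' hq') ?_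
        rw [hdecomp, ← hQ p q h1 h2 hp hq]
        exact hs
      · filter_upwards with s h1 h2 hp hq
        exact absurd ⟨h1, h2, hp, hq⟩ hc
    have H2 := (Filter.eventually_all_finset
      (Finset.Iic ((r₁ + r₂ + m₁, r₁ + n₁ + r₂ + n₂) : ℕ × ℕ))).mpr (fun pq _ => key pq)
    filter_upwards [H2] with s hs p q h1 h2 hp hq
    exact hs (p, q) (Finset.mem_Iic.mpr (Prod.mk_le_mk.mpr ⟨hp, hq⟩)) h1 h2 hp hq
  refine ⟨hXbar, ?_⟩
  refine mem_tangentConeAt_of_seq (atTop : Filter ℕ) (fun n => (n : ℝ) + 1) (fun n => (1 / ((n : ℝ) + 1)) • T) ?_ ?_ ?_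
  swap
  · have htend : Filter.Tendsto (fun n : ℕ => 1 / ((n : ℝ) + 1)) Filter.atTop (𝓝 0) :=
      tendsto_one_div_add_atTop_nhds_zero_nat
    filter_upwards [htend.eventually hev] with n hn
    exact hn
  · have h0 : Filter.Tendsto (fun n : ℕ => 1 / ((n : ℝ) + 1)) Filter.atTop (𝓝 0) :=
      tendsto_one_div_add_atTop_nhds_zero_nat
    simpa using h0.smul_const T
  · have hconst : ∀ n : ℕ, ((n : ℝ) + 1) • ((1 / ((n : ℝ) + 1)) • T) = T := by
      intro n
      rw [smul_smul, mul_one_div, div_self (by positivity), one_smul]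
    exact Filter.Tendsto.congr (fun n => (hconst n).symm) tendsto_const_nhds

end TheoremProof
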